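/- Define sequences (y_k), (z_k) by y_0 = 1, z_{k+1} = (2·(2^k)^3 + 2^k)/3, and y_{k+1} = 5 y_k + z_{k+1}. Then for all k ≥ 0, y_k = (8·5^k)/9 + (2/9)·8^k − (1/9)·2^k. -/
import Mathlib

theorem cum_b_formula (y z : ℕ → ℚ)
    (hy0 : y 0 = 1)
    (hz : ∀ k : ℕ, z (k + 1) = (2 * ((2 : ℚ) ^ k) ^ 3 + 2 ^ k) / 3)
    (hy : ∀ k : ℕ, y (k + 1) = 5 * y k + z (k + 1)) :
    ∀ k : ℕ, y k = 8 * 5 ^ k / 9 + (2 / 9) * 8 ^ k - (1 / 9) * 2 ^ k := by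
  intro k
  induction k with
  | zero => rw [hy0]; norm_num
  | succ n ih =>
    rw [hy n, hz n, ih]
    have h8 : (8 : ℚ) ^ n = 2 ^ n * 2 ^ n * 2 ^ n := by
      rw [show (8:ℚ) = 2*2*2 by norm_num, mul_pow, mul_pow]
    push_cast [pow_succ]
    rw [h8]
    ring
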